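/- Let G be a unicyclic graph on n vertices with girth g, with cycle vertices 1,…,g, and let l_i ≥ 0 be the number of vertices in the tree attached at cycle vertex i, so l_1 + ⋯ + l_g = n - g. Suppose at least two cycle vertices i satisfy l_i ≥ 1. If n ≥ 3g - 1, then there exist two distinct cycle vertices i, j with l_i ≥ 1, l_j ≥ 1, and l_i ≥ 2·d(i,j), where d(i,j) is the cyclic distance between i and j. -/

import Mathlib

/-- The cyclic distance between two vertices of a cycle of length `g`
(vertices labelled by `Fin g`). -/
def cycDist {g : ℕ} (i j : Fin g) : ℕ :=
  min ((j.val + g - i.val) % g) ((i.val + g - j.val) % g)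

open Fin.NatCast

theorem stmt_14 (n g : ℕ) (hg : 3 ≤ g) (hng : g < n) (hn : 3 * g - 1 ≤ n)
    (l : Fin g → ℕ) (hsum : ∑ i, l i = n - g)
    (htwo : ∃ i j : Fin g, i ≠ j ∧ 1 ≤ l i ∧ 1 ≤ l j) :
    ∃ i j : Fin g, i ≠ j ∧ 1 ≤ l i ∧ 1 ≤ l j ∧ 2 * cycDist i j ≤ l i := by
  by_contra hcon
  push_neg at hcon
  haveI : NeZero g := ⟨by omega⟩
  classical
  set S : Finset (Fin g) := Finset.univ.filter (fun i => 1 ≤ l i) with hS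
  have hmemS : ∀ i : Fin g, i ∈ S ↔ 1 ≤ l i := by
    intro i; simp [hS]
  obtain ⟨a, b, hab, ha, hb⟩ := htwo
  have hr : 2 ≤ S.card := by
    have hsub : ({a, b} : Finset (Fin g)) ⊆ S := by
      intro x hx
      simp only [Finset.mem_insert, Finset.mem_singleton] at hx
      rcases hx with rfl | rfl <;> simp [hmemS, ha, hb]
    have hcard2 : ({a, b} : Finset (Fin g)).card = 2 := by
      rw [Finset.card_insert_of_notMem (by simpa using hab), Finset.card_singleton]
    calc 2 = ({a, b} : Finset (Fin g)).card := hcard2.symm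
      _ ≤ S.card := Finset.card_le_card hsub
  -- existence of a forward gap
  have hex : ∀ i ∈ S, ∃ k, 0 < k ∧ k < g ∧ i + (k : Fin g) ∈ S := by
    intro i hi
    have h1 : 1 < S.card := by omega
    obtain ⟨j, hj, hji⟩ := Finset.exists_mem_ne h1 i
    refine ⟨(j - i).val, ?_, (j - i).isLt, ?_⟩
    · rcases Nat.eq_zero_or_pos (j - i).val with h0 | h0
      · exact absurd (sub_eq_zero.mp (Fin.ext h0)) hji
      · exact h0
    · rw [Fin.cast_val_eq_self (j - i), add_sub_cancel]
      exact hj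
  set f : Fin g → ℕ := fun i =>
    if h : ∃ k, 0 < k ∧ k < g ∧ i + (k : Fin g) ∈ S then Nat.find h else 0 with hf
  have hfspec : ∀ i ∈ S, 0 < f i ∧ f i < g ∧ i + (f i : Fin g) ∈ S := by
    intro i hi
    have h := hex i hi
    simp only [hf, dif_pos h]
    exact Nat.find_spec h
  have hfmin : ∀ i ∈ S, ∀ s, 0 < s → s < f i → i + (s : Fin g) ∉ S := by
    intro i hi s hs hsf hmem
    have hfg := (hfspec i hi).2.1
    have hsg : s < g := lt_trans hsf hfg
    have h := hex i hi
    simp only [hf, dif_pos h] at hsf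
    exact Nat.find_min h hsf ⟨hs, hsg, hmem⟩
  -- key bound : l i + 1 ≤ 2 * f i  for i ∈ S
  have hkey : ∀ i ∈ S, l i + 1 ≤ 2 * f i := by
    intro i hi
    obtain ⟨hf1, hfg, hfS⟩ := hfspec i hi
    have hvalc : ((f i : Fin g)).val = f i := Fin.val_cast_of_lt hfg
    have hne : i ≠ i + (f i : Fin g) := by
      intro h
      have h0 : ((f i : Fin g)) = 0 := (left_eq_add).mp h
      rw [Fin.ext_iff, hvalc] at h0
      simp at h0
      omega
    have hd : cycDist i (i + (f i : Fin g)) ≤ f i := by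
      have h1 : (i + (f i : Fin g)).val = (i.val + f i) % g := by
        rw [Fin.val_add, hvalc]
      have hig : i.val < g := i.isLt
      have h2 : ((i + (f i : Fin g)).val + g - i.val) % g = f i := by
        rw [h1]
        rcases Nat.lt_or_ge (i.val + f i) g with hlt | hge
        · rw [Nat.mod_eq_of_lt hlt]
          have he : i.val + f i + g - i.val = f i + g := by omega
          rw [he, Nat.add_mod_right, Nat.mod_eq_of_lt hfg]
        · have hlt2 : i.val + f i - g < g := by omega
          have he : (i.val + f i) % g = i.val + f i - g := by
            rw [Nat.mod_eq_sub_mod hge, Nat.mod_eq_of_lt hlt2]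
          rw [he]
          have he2 : i.val + f i - g + g - i.val = f i := by omega
          rw [he2, Nat.mod_eq_of_lt hfg]
      calc cycDist i (i + (f i : Fin g))
          ≤ ((i + (f i : Fin g)).val + g - i.val) % g := min_le_left _ _
        _ = f i := h2
    have := hcon i (i + (f i : Fin g)) hne ((hmemS i).mp hi) ((hmemS _).mp hfS)
    omega
  -- main disjointness helper
  have main : ∀ i ∈ S, ∀ j ∈ S, ∀ t t' : ℕ, t < f i → t' ≤ t →
      j + (t' : Fin g) = i + (t : Fin g) → i = j := by
    intro i hi j hj t t' ht ht' heq
    have hcast : (t : Fin g) = (t' : Fin g) + ((t - t' : ℕ) : Fin g) := by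
      conv_lhs => rw [show t = t' + (t - t') by omega]
      push_cast
      ring
    have hj2 : j = i + ((t - t' : ℕ) : Fin g) := by
      rw [hcast] at heq
      have h3 : j + (t' : Fin g) = (i + ((t - t' : ℕ) : Fin g)) + (t' : Fin g) := by
        rw [heq]; abel
      exact add_right_cancel h3
    rcases Nat.eq_zero_or_pos (t - t') with h0 | h0
    · rw [h0] at hj2
      simp at hj2
      exact hj2.symm
    · exact absurd (hj2 ▸ hj) (hfmin i hi (t - t') h0 (by omega))
  -- sum of gaps is at most g
  have hsumf : ∑ i ∈ S, f i ≤ g := by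
    have hdisj : ∀ i ∈ S, ∀ j ∈ S, i ≠ j →
        Disjoint ((Finset.range (f i)).image (fun (t : ℕ) => i + (t : Fin g)))
          ((Finset.range (f j)).image (fun (t : ℕ) => j + (t : Fin g))) := by
      intro i hi j hj hij
      rw [Finset.disjoint_left]
      rintro x hx hx'
      simp only [Finset.mem_image, Finset.mem_range] at hx hx'
      obtain ⟨t, ht, rfl⟩ := hx
      obtain ⟨t', ht', heq⟩ := hx'
      rcases le_total t' t with hle | hle
      · exact hij (main i hi j hj t t' ht hle heq)
      · exact hij (main j hj i hi t' t ht' hle heq.symm).symm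
    have hcard : ∀ i ∈ S, ((Finset.range (f i)).image (fun (t : ℕ) => i + (t : Fin g))).card = f i := by
      intro i hi
      have hfg := (hfspec i hi).2.1
      rw [Finset.card_image_of_injOn, Finset.card_range]
      intro t ht t' ht' h
      simp only [Finset.coe_range, Set.mem_Iio] at ht ht'
      have hc : (t : Fin g) = (t' : Fin g) := add_left_cancel h
      have hv := congrArg Fin.val hc
      rwa [Fin.val_cast_of_lt (lt_trans ht hfg), Fin.val_cast_of_lt (lt_trans ht' hfg)] at hv
    calc ∑ i ∈ S, f i = ∑ i ∈ S, ((Finset.range (f i)).image (fun (t : ℕ) => i + (t : Fin g))).card :=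
          (Finset.sum_congr rfl fun i hi => (hcard i hi).symm)
      _ = (S.biUnion (fun i => (Finset.range (f i)).image (fun (t : ℕ) => i + (t : Fin g)))).card :=
          (Finset.card_biUnion hdisj).symm
      _ ≤ (Finset.univ : Finset (Fin g)).card := Finset.card_le_card (Finset.subset_univ _)
      _ = g := by simp
  -- conclude
  have hS0 : ∑ i ∈ S, l i = ∑ i, l i := by
    apply Finset.sum_subset (Finset.subset_univ S)
    intro x _ hx
    rw [hmemS] at hx
    omega
  have h1 : ∑ i ∈ S, (l i + 1) ≤ ∑ i ∈ S, 2 * f i := Finset.sum_le_sum hkey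
  rw [Finset.sum_add_distrib, Finset.sum_const, smul_eq_mul, mul_one] at h1
  have h2 : ∑ i ∈ S, 2 * f i = 2 * ∑ i ∈ S, f i := by
    rw [Finset.mul_sum]
  omega
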